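/- Let p be a prime and n ≥ 0 with standard base-p representation n_ℓ ⋯ n_1 n_0. Then the number of integers m with 0 ≤ m ≤ n such that p does not divide C(n, m) equals (n_0 + 1)(n_1 + 1)⋯(n_ℓ + 1). -/

import Mathlib

private lemma fine_not_dvd_small (p : ℕ) (hp : p.Prime) {r a : ℕ} (hr : r < p) (ha : a ≤ r) :
    ¬ p ∣ r.choose a := by
  intro h
  have h1 : r.choose a ∣ r.factorial := by
    have := Nat.choose_mul_factorial_mul_factorial ha
    exact ⟨a.factorial * (r - a).factorial, by rw [← this]; ring⟩
  exact absurd ((Nat.Prime.dvd_factorial hp).mp (dvd_trans h h1)) (Nat.not_le.mpr hr)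

private lemma fine_lucas (p : ℕ) (hp : p.Prime) (n m : ℕ) :
    ¬ p ∣ n.choose m ↔ (m % p ≤ n % p ∧ ¬ p ∣ (n / p).choose (m / p)) := by
  haveI : Fact p.Prime := ⟨hp⟩
  have hl := Choose.choose_modEq_choose_mod_mul_choose_div_nat (n := n) (k := m) (p := p)
  have hdvd : p ∣ n.choose m ↔ p ∣ (n % p).choose (m % p) * (n / p).choose (m / p) :=
    (Nat.modEq_zero_iff_dvd).symm.trans
      (Iff.trans ⟨fun h => hl.symm.trans h, fun h => hl.trans h⟩ Nat.modEq_zero_iff_dvd)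
  rw [hdvd, hp.dvd_mul]
  constructor
  · intro h
    push_neg at h
    refine ⟨?_, h.2⟩
    by_contra hle
    exact h.1 (by rw [Nat.choose_eq_zero_of_lt (Nat.lt_of_not_le hle)]; exact dvd_zero p)
  · rintro ⟨h1, h2⟩
    rintro (h | h)
    · exact fine_not_dvd_small p hp (Nat.mod_lt _ hp.pos) h1 h
    · exact h2 h

theorem fine_theorem (p : ℕ) (hp : p.Prime) (n : ℕ) :
    ((Finset.range (n + 1)).filter fun m => ¬ p ∣ n.choose m).card =
      ((Nat.digits p n).map (· + 1)).prod := by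
  induction n using Nat.strong_induction_on with
  | _ n ih =>
    rcases Nat.eq_zero_or_pos n with rfl | hn
    · simp [Finset.filter_singleton, Nat.dvd_one, hp.ne_one]
    have hp2 : 2 ≤ p := hp.two_le
    have hdiv : n / p < n := Nat.div_lt_self hn (by omega)
    rw [Nat.digits_def' hp2 hn, List.map_cons, List.prod_cons, ← ih (n / p) hdiv]
    set q := n / p with hq
    set r := n % p with hr
    rw [← Finset.card_range (r + 1), ← Finset.card_product]
    have hrp : r < p := Nat.mod_lt _ hp.pos
    apply Finset.card_nbij' (fun m => (m % p, m / p)) (fun a => a.1 + p * a.2)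
    · intro m hm
      simp only [Finset.mem_coe, Finset.mem_filter, Finset.mem_range, Nat.lt_succ_iff] at hm
      rw [fine_lucas p hp] at hm
      simp only [Finset.mem_coe, Finset.mem_product, Finset.mem_filter, Finset.mem_range, Nat.lt_succ_iff]
      exact ⟨hm.2.1, Nat.div_le_div_right hm.1, hm.2.2⟩
    · intro a ha
      simp only [Finset.mem_coe, Finset.mem_product, Finset.mem_filter, Finset.mem_range, Nat.lt_succ_iff] at ha
      obtain ⟨ha1, ha2, ha3⟩ := ha
      have hap : a.1 < p := lt_of_le_of_lt ha1 hrp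
      have hmod : (a.1 + p * a.2) % p = a.1 := by
        rw [Nat.add_mul_mod_self_left, Nat.mod_eq_of_lt hap]
      have hdiv2 : (a.1 + p * a.2) / p = a.2 := by
        rw [Nat.add_mul_div_left _ _ hp.pos, Nat.div_eq_of_lt hap, Nat.zero_add]
      simp only [Finset.mem_coe, Finset.mem_filter, Finset.mem_range, Nat.lt_succ_iff]
      constructor
      · calc a.1 + p * a.2 ≤ r + p * q := by
              exact Nat.add_le_add ha1 (Nat.mul_le_mul_left p ha2)
          _ = n := by rw [hr, hq, Nat.mod_add_div]
      · rw [fine_lucas p hp, hmod, hdiv2]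
        exact ⟨ha1, ha3⟩
    · intro m hm
      exact Nat.mod_add_div m p
    · intro a ha
      simp only [Finset.mem_coe, Finset.mem_product, Finset.mem_filter, Finset.mem_range, Nat.lt_succ_iff] at ha
      have hap : a.1 < p := lt_of_le_of_lt ha.1 hrp
      ext
      · simp [Nat.add_mul_mod_self_left, Nat.mod_eq_of_lt hap]
      · simp [Nat.add_mul_div_left _ _ hp.pos, Nat.div_eq_of_lt hap]
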